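/- Let R be an almost sparse sequence embedded in a structure extending (ℤ;<,+) (nonstandard model), and let a, b be positive elements with a ≪ b (meaning S^m(a) < S^{-m}(b) for all m ∈ ℕ). Then for any operators A <_{ae} C <_{ae} B, one has A(b) < C(b) ± a < B(b); in particular b ± a ≈ b. -/

import Mathlib

open Filter

/-- Evaluation of an operator `A(x) = ∑ z_i S^i(x)` (given by a finitely supported
family of integer coefficients) at the n-th term of the sequence r, where
`S^i(r_n) = r_{n+i}` (clamped at index 0, matching the convention S⁻¹(r_0) = r_0). -/
def opEval (r : ℕ → ℤ) (A : ℤ →₀ ℤ) (n : ℕ) : ℤ :=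
  A.sum fun i c => c * r (((n : ℤ) + i).toNat)

/-- `A >_{ae} B` : A(a) > B(a) for all but finitely many a ∈ R. -/
def AEgt (r : ℕ → ℤ) (A B : ℤ →₀ ℤ) : Prop :=
  ∀ᶠ n in atTop, opEval r B n < opEval r A n

/-- `A =_{ae} B` : A(a) = B(a) for all but finitely many a ∈ R. -/
def AEeq (r : ℕ → ℤ) (A B : ℤ →₀ ℤ) : Prop :=
  ∀ᶠ n in atTop, opEval r A n = opEval r B n

/-- R is almost sparse: (1) any two operators are ae-comparable; (2) whenever
A >_{ae} B there is Δ ≥ 0 with A(S^Δ(x)) >_{ae} B(S^Δ(x)) + x. -/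
def AlmostSparse (r : ℕ → ℤ) : Prop :=
  (∀ A B : ℤ →₀ ℤ, AEgt r A B ∨ AEgt r B A ∨ AEeq r A B) ∧
  (∀ A B : ℤ →₀ ℤ, AEgt r A B →
    ∃ Δ : ℕ, ∀ᶠ n in atTop, opEval r B (n + Δ) + r n < opEval r A (n + Δ))

/-- Evaluation of an operator at an element of a nonstandard model, via the
family `shift : ℤ → U` of shifts S^i(b) of the element b. -/
def opAt {U : Type*} [AddCommGroup U] (shift : ℤ → U) (A : ℤ →₀ ℤ) : U :=
  A.sum fun i c => c • shift i

/-- The shifts S^i(b) of an element b, given the successor S and predecessor S⁻¹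
of the nonstandard model (with S^0(b) = b for b ∈ R^U). -/
def shiftOf {U : Type*} (Sf Si : U → U) (b : U) (i : ℤ) : U :=
  if 0 ≤ i then Sf^[i.toNat] b else Si^[(-i).toNat] b

lemma opEval_add' (r : ℕ → ℤ) (A B : ℤ →₀ ℤ) (n : ℕ) :
    opEval r (A + B) n = opEval r A n + opEval r B n :=
  Finsupp.sum_add_index' (fun _ => by simp) (fun _ _ _ => add_mul _ _ _)

lemma opEval_single' (r : ℕ → ℤ) (i c : ℤ) (n : ℕ) :
    opEval r (Finsupp.single i c) n = c * r (((n : ℤ) + i).toNat) :=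
  Finsupp.sum_single_index (by simp)

lemma opAt_add' {U : Type*} [AddCommGroup U] (shift : ℤ → U) (A B : ℤ →₀ ℤ) :
    opAt shift (A + B) = opAt shift A + opAt shift B :=
  Finsupp.sum_add_index' (fun i => zero_smul _ _) (fun i b₁ b₂ => add_smul _ _ _)

lemma opAt_single' {U : Type*} [AddCommGroup U] (shift : ℤ → U) (i c : ℤ) :
    opAt shift (Finsupp.single i c) = c • shift i :=
  Finsupp.sum_single_index (zero_smul _ _)

lemma shiftOf_negNat {U : Type*} (Sf Si : U → U) (b : U) (Δ : ℕ) :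
    shiftOf Sf Si b (-(Δ : ℤ)) = Si^[Δ] b := by
  cases Δ with
  | zero => simp [shiftOf]
  | succ k =>
      have h : ¬ (0 ≤ -((k + 1 : ℕ) : ℤ)) := by push_cast; omega
      rw [shiftOf, if_neg h]
      congr 1

/-- In a saturated extension of (ℤ;<,+,R) with R almost sparse: if a, b are
positive, b (an element of R^U) is nonstandard and realizes the ae-type of the
sequence (the transfer hypothesis `htr`), and a ≪ b (∀ m, S^m(a) < S^{-m}(b)),
then for operators A <_{ae} C <_{ae} B we have A(b) < C(b) ± a < B(b); in
particular b ± a ≈ b. -/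
theorem stmt14 (r : ℕ → ℤ) (hmono : StrictMono r) (hs : AlmostSparse r)
    {U : Type*} [AddCommGroup U] [LinearOrder U] [IsOrderedAddMonoid U] (Sf Si : U → U) (a b : U)
    (ha : 0 < a) (hb : 0 < b)
    (hSf : ∀ x : U, 0 ≤ x → x ≤ Sf x)
    (htr : ∀ A B : ℤ →₀ ℤ, AEgt r A B ↔
      opAt (shiftOf Sf Si b) B < opAt (shiftOf Sf Si b) A)
    (hll : ∀ m : ℕ, Sf^[m] a < Si^[m] b)
    (A C B : ℤ →₀ ℤ) (hCA : AEgt r C A) (hBC : AEgt r B C) :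
    (opAt (shiftOf Sf Si b) A < opAt (shiftOf Sf Si b) C + a ∧
      opAt (shiftOf Sf Si b) C + a < opAt (shiftOf Sf Si b) B) ∧
    (opAt (shiftOf Sf Si b) A < opAt (shiftOf Sf Si b) C - a ∧
      opAt (shiftOf Sf Si b) C - a < opAt (shiftOf Sf Si b) B) ∧
    (∃ m : ℕ, Si^[m] b < b + a ∧ b + a < Sf^[m] b) ∧
    (∃ m : ℕ, Si^[m] b < b - a ∧ b - a < Sf^[m] b) := by
  -- a is below every Si^[Δ] b
  have haS : ∀ k : ℕ, 0 < Sf^[k] a ∧ a ≤ Sf^[k] a := by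
    intro k
    induction k with
    | zero => exact ⟨ha, le_refl a⟩
    | succ k ih =>
        rw [Function.iterate_succ_apply']
        have h1 := hSf _ ih.1.le
        exact ⟨lt_of_lt_of_le ih.1 h1, le_trans ih.2 h1⟩
  have haSi : ∀ Δ : ℕ, a < Si^[Δ] b := fun Δ =>
    lt_of_le_of_lt (haS Δ).2 (hll Δ)
  -- key transfer of the sparsity condition
  have key : ∀ X Y : ℤ →₀ ℤ, AEgt r X Y →
      opAt (shiftOf Sf Si b) Y + a < opAt (shiftOf Sf Si b) X := by
    intro X Y hXY
    obtain ⟨Δ, hΔ⟩ := hs.2 X Y hXY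
    obtain ⟨N, hN⟩ := eventually_atTop.mp hΔ
    have h2 : AEgt r X (Y + Finsupp.single (-(Δ : ℤ)) 1) := by
      refine eventually_atTop.mpr ⟨N + Δ, fun m hm => ?_⟩
      have hmΔ : Δ ≤ m := le_trans (Nat.le_add_left Δ N) hm
      have hn : N ≤ m - Δ := by omega
      have := hN (m - Δ) hn
      rw [Nat.sub_add_cancel hmΔ] at this
      rw [opEval_add', opEval_single']
      have htn : (((m : ℤ) + -(Δ : ℤ)).toNat) = m - Δ := by omega
      rw [htn, one_mul]
      linarith
    have h3 := (htr _ _).mp h2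
    rw [opAt_add', opAt_single', one_smul, shiftOf_negNat] at h3
    exact lt_trans (add_lt_add_right (haSi Δ) _) h3
  -- basic transfers
  have hA := (htr C A).mp hCA
  have hB := (htr B C).mp hBC
  have hCa := key B C hBC
  have hAa := key C A hCA
  -- b < Sf b and Si b < b - a, b + a < Sf b
  have e0 : ∀ n : ℕ, opEval r (Finsupp.single (0 : ℤ) 1) n = r n := by
    intro n; rw [opEval_single']; simp
  have e1 : ∀ n : ℕ, opEval r (Finsupp.single (1 : ℤ) 1) n = r (n + 1) := by
    intro n; rw [opEval_single', one_mul]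
    congr 1
  have hae1 : AEgt r (Finsupp.single (1 : ℤ) 1) (Finsupp.single (0 : ℤ) 1) := by
    refine Eventually.of_forall fun n => ?_
    rw [e0, e1]; exact hmono (Nat.lt_succ_self n)
  have hae0 : AEgt r (Finsupp.single (0 : ℤ) 1) (Finsupp.single (-1 : ℤ) 1) := by
    refine eventually_atTop.mpr ⟨1, fun n hn => ?_⟩
    rw [e0, opEval_single', one_mul]
    apply hmono
    omega
  have os0 : opAt (shiftOf Sf Si b) (Finsupp.single (0 : ℤ) 1) = b := by
    rw [opAt_single', one_smul]; simp [shiftOf]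
  have os1 : opAt (shiftOf Sf Si b) (Finsupp.single (1 : ℤ) 1) = Sf b := by
    rw [opAt_single', one_smul]; simp [shiftOf]
  have osm1 : opAt (shiftOf Sf Si b) (Finsupp.single (-1 : ℤ) 1) = Si b := by
    have : (-1 : ℤ) = -((1 : ℕ) : ℤ) := by norm_num
    rw [opAt_single', one_smul, this, shiftOf_negNat]
    simp
  have hup := key _ _ hae1
  rw [os0, os1] at hup
  have hdown := key _ _ hae0
  rw [os0, osm1] at hdown
  have hbSf : b ≤ Sf b := hSf b hb.le
  have hSib : Si b < b := lt_trans (lt_add_of_pos_right _ ha) hdown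
  refine ⟨⟨lt_trans hA (lt_add_of_pos_right _ ha), hCa⟩,
    ⟨lt_sub_iff_add_lt.mpr hAa, lt_trans (sub_lt_self _ ha) hB⟩,
    ⟨1, ?_, ?_⟩, ⟨1, ?_, ?_⟩⟩ <;> simp only [Function.iterate_one]
  · exact lt_trans hSib (lt_add_of_pos_right _ ha)
  · exact hup
  · exact lt_sub_iff_add_lt.mpr hdown
  · exact lt_of_lt_of_le (sub_lt_self _ ha) hbSf
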